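/- arXiv:0804.0579 — 2 statements merged into one kernel-verified Lean document; each statement's English description precedes it below -/
import Mathlib

section
/- Let σ ∈ S_d be a permutation and let c be a cycle of σ of length n ≥ 2. The number of transpositions τ = (i j) with both i and j in the support of c such that τσ has, in place of c, two cycles of lengths m' and m'' with m' + m'' = n, is n if m' ≠ m'' and n/2 if m' = m''. -/
open Equiv

section CutAux

open Equiv.Perm

private lemma cut_inj {d : ℕ} {c : Perm (Fin d)} (hcyc : c.IsCycle) {a : Fin d}
    (ha : a ∈ c.support) {i j : ℕ} (hi : i < c.support.card) (hj : j < c.support.card)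
    (h : (c ^ i) a = (c ^ j) a) : i = j := by
  wlog hij : i ≤ j generalizing i j
  · exact (this hj hi h.symm (le_of_not_ge hij)).symm
  by_contra hne
  have hlt : 0 < j - i := by omega
  have h1 : (c ^ (j - i)) ((c ^ i) a) = (c ^ i) a := by
    rw [← Perm.mul_apply, ← pow_add, Nat.sub_add_cancel hij]
    exact h.symm
  have hca : c ((c ^ i) a) ≠ (c ^ i) a :=
    Perm.mem_support.mp (Perm.pow_apply_mem_support.mpr ha)
  have h2 : c ^ (j - i) = 1 := (hcyc.pow_eq_one_iff' hca).mpr h1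
  have h3 : orderOf c ∣ (j - i) := orderOf_dvd_of_pow_eq_one h2
  rw [hcyc.orderOf] at h3
  have := Nat.le_of_dvd hlt h3
  omega

private lemma cut_pow_apply {d : ℕ} {σ c : Perm (Fin d)} (hc : c ∈ σ.cycleFactorsFinset)
    {a : Fin d} (ha : a ∈ c.support) (j : ℕ) : (σ ^ j) a = (c ^ j) a := by
  induction j with
  | zero => rfl
  | succ j ih =>
    rw [pow_succ', pow_succ', Perm.mul_apply, Perm.mul_apply, ih,
      (Perm.mem_cycleFactorsFinset_iff.mp hc).2 _ (Perm.pow_apply_mem_support.mpr ha)]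

private lemma cut_gpow {d : ℕ} {σ c : Perm (Fin d)} (hc : c ∈ σ.cycleFactorsFinset)
    {n : ℕ} (hn : c.support.card = n) {a : Fin d} (ha : a ∈ c.support)
    {k : ℕ} (hk0 : 0 < k) (hkn : k < n) :
    (∀ j, j < k → ((Equiv.swap a ((c ^ k) a) * σ) ^ j) a = (c ^ j) a) ∧
      ((Equiv.swap a ((c ^ k) a) * σ) ^ k) a = a := by
  have hcyc := (Perm.mem_cycleFactorsFinset_iff.mp hc).1
  have hσ : ∀ x ∈ c.support, σ x = c x := fun x hx =>
    ((Perm.mem_cycleFactorsFinset_iff.mp hc).2 x hx).symm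
  set b := (c ^ k) a with hb
  set g := Equiv.swap a b * σ with hg
  have hσc : ∀ j : ℕ, σ ((c ^ j) a) = (c ^ (j + 1)) a := by
    intro j
    rw [hσ _ (Perm.pow_apply_mem_support.mpr ha), pow_succ', Perm.mul_apply]
  have hgstep : ∀ j, j + 1 < k → g ((c ^ j) a) = (c ^ (j + 1)) a := by
    intro j hj
    rw [hg, Perm.mul_apply, hσc j]
    refine Equiv.swap_apply_of_ne_of_ne ?_ ?_
    · intro h
      have : j + 1 = 0 := cut_inj hcyc ha (by omega) (by omega) (by simpa using h)
      omega
    · intro h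
      have : j + 1 = k := cut_inj hcyc ha (by omega) (by omega) h
      omega
  have hpow : ∀ j, j < k → (g ^ j) a = (c ^ j) a := by
    intro j hj
    induction j with
    | zero => rfl
    | succ j ih =>
      rw [pow_succ', Perm.mul_apply, ih (by omega), hgstep j hj]
  refine ⟨hpow, ?_⟩
  have hk : k = (k - 1) + 1 := by omega
  rw [hk, pow_succ', Perm.mul_apply, hpow (k - 1) (by omega), hg, Perm.mul_apply,
    hσc (k - 1), ← hk, ← hb]
  exact Equiv.swap_apply_right a b

private lemma cut_orbit {d : ℕ} {σ c : Perm (Fin d)} (hc : c ∈ σ.cycleFactorsFinset)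
    {n : ℕ} (hn : c.support.card = n) {a : Fin d} (ha : a ∈ c.support)
    {k : ℕ} (hk0 : 0 < k) (hkn : k < n) :
    {z ∈ (c.support : Set (Fin d)) | (Equiv.swap a ((c ^ k) a) * σ).SameCycle a z}
      = (fun j : ℕ => (c ^ j) a) '' Set.Iio k := by
  obtain ⟨hpow, hgk⟩ := cut_gpow hc hn ha hk0 hkn
  set b := (c ^ k) a with hb
  set g := Equiv.swap a b * σ with hg
  have hfix : ∀ q : ℕ, (g ^ (k * q)) a = a := by
    intro q
    induction q with
    | zero => rfl
    | succ q ih =>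
      rw [Nat.mul_succ, pow_add, Perm.mul_apply, hgk, ih]
  ext z
  simp only [Set.mem_setOf_eq, Set.mem_image, Set.mem_Iio, Finset.mem_coe]
  constructor
  · rintro ⟨hzS, hsc⟩
    obtain ⟨i, -, rfl⟩ := hsc.exists_pow_eq'
    refine ⟨i % k, Nat.mod_lt _ hk0, ?_⟩
    conv_rhs => rw [← Nat.mod_add_div i k]
    rw [pow_add, Perm.mul_apply, hfix (i / k), hpow _ (Nat.mod_lt _ hk0)]
  · rintro ⟨j, hj, rfl⟩
    exact ⟨Perm.pow_apply_mem_support.mpr ha,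
      ⟨(j : ℤ), by rw [zpow_natCast]; exact hpow j hj⟩⟩

private lemma cut_card {d : ℕ} {σ c : Perm (Fin d)} (hc : c ∈ σ.cycleFactorsFinset)
    {n : ℕ} (hn : c.support.card = n) {a : Fin d} (ha : a ∈ c.support)
    {k : ℕ} (hk0 : 0 < k) (hkn : k < n) :
    ({z ∈ (c.support : Set (Fin d)) | (Equiv.swap a ((c ^ k) a) * σ).SameCycle a z}).ncard
      = k := by
  have hcyc := (Perm.mem_cycleFactorsFinset_iff.mp hc).1
  rw [cut_orbit hc hn ha hk0 hkn, ← Finset.coe_range,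
    Set.ncard_image_of_injOn, Set.ncard_coe_finset, Finset.card_range]
  intro i hi j hj hij
  simp only [Finset.coe_range, Set.mem_Iio] at hi hj
  exact cut_inj hcyc ha (by omega) (by omega) hij

private lemma cut_not_same {d : ℕ} {σ c : Perm (Fin d)} (hc : c ∈ σ.cycleFactorsFinset)
    {n : ℕ} (hn : c.support.card = n) {a : Fin d} (ha : a ∈ c.support)
    {k : ℕ} (hk0 : 0 < k) (hkn : k < n) :
    ¬ (Equiv.swap a ((c ^ k) a) * σ).SameCycle a ((c ^ k) a) := by
  have hcyc := (Perm.mem_cycleFactorsFinset_iff.mp hc).1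
  intro h
  have hmem : (c ^ k) a ∈
      {z ∈ (c.support : Set (Fin d)) | (Equiv.swap a ((c ^ k) a) * σ).SameCycle a z} :=
    ⟨Perm.pow_apply_mem_support.mpr ha, h⟩
  rw [cut_orbit hc hn ha hk0 hkn] at hmem
  obtain ⟨j, hj, hj'⟩ := hmem
  rw [Set.mem_Iio] at hj
  have : j = k := cut_inj hcyc ha (by omega) (by omega) hj'
  omega

end CutAux

/-- Cut part of cut-and-join: for a cycle `c` of `σ` of length `n ≥ 2`, the number of
transpositions supported inside `c` that cut it into two cycles of lengths `m₁`, `m₂`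
(with `m₁ + m₂ = n`) is `n` if `m₁ ≠ m₂` and `n / 2` if `m₁ = m₂`. -/
theorem cut_count (d : ℕ) (σ c : Equiv.Perm (Fin d))
    (hc : c ∈ σ.cycleFactorsFinset) (n m₁ m₂ : ℕ)
    (hn : c.support.card = n) (h2 : 2 ≤ n)
    (hm₁ : 1 ≤ m₁) (hm₂ : 1 ≤ m₂) (hsum : m₁ + m₂ = n) :
    ({τ : Equiv.Perm (Fin d) | τ.IsSwap ∧ τ.support ⊆ c.support ∧
      ∃ x ∈ c.support, ∃ y ∈ c.support,
        ¬ (τ * σ).SameCycle x y ∧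
        ({z ∈ (c.support : Set (Fin d)) | (τ * σ).SameCycle x z}).ncard = m₁ ∧
        ({z ∈ (c.support : Set (Fin d)) | (τ * σ).SameCycle y z}).ncard = m₂}).ncard
      = if m₁ = m₂ then n / 2 else n := by
  classical
  have hcyc := (Equiv.Perm.mem_cycleFactorsFinset_iff.mp hc).1
  have hn0 : 0 < n := by omega
  have hm₁n : m₁ < n := by omega
  have hm₂n : m₂ < n := by omega
  have hcn1 : c ^ n = 1 := by
    rw [← hn, ← hcyc.orderOf]; exact pow_orderOf_eq_one c
  have hred : ∀ i : ℕ, (c ^ i : Equiv.Perm (Fin d)) = c ^ (i % n) := by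
    intro i
    conv_lhs => rw [← Nat.mod_add_div i n]
    rw [pow_add, pow_mul, hcn1, one_pow, mul_one]
  have key : ∀ a, (c ^ m₂) ((c ^ m₁) a) = a := by
    intro a
    rw [← Equiv.Perm.mul_apply, ← pow_add]
    have h' : m₂ + m₁ = n := by omega
    rw [h', hcn1, Equiv.Perm.one_apply]
  have hMeq : {τ : Equiv.Perm (Fin d) | τ.IsSwap ∧ τ.support ⊆ c.support ∧
      ∃ x ∈ c.support, ∃ y ∈ c.support,
        ¬ (τ * σ).SameCycle x y ∧
        ({z ∈ (c.support : Set (Fin d)) | (τ * σ).SameCycle x z}).ncard = m₁ ∧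
        ({z ∈ (c.support : Set (Fin d)) | (τ * σ).SameCycle y z}).ncard = m₂}
      = (fun a => Equiv.swap a ((c ^ m₁) a)) '' ↑c.support := by
    ext τ
    simp only [Set.mem_setOf_eq, Set.mem_image]
    constructor
    · rintro ⟨⟨u, v, huv, rfl⟩, hsub, x, hx, y, hy, hxy, hcx, hcy⟩
      have hu : u ∈ c.support := hsub (by
        rw [Equiv.Perm.support_swap huv]; exact Finset.mem_insert_self _ _)
      have hv : v ∈ c.support := hsub (by
        rw [Equiv.Perm.support_swap huv]; simp)
      obtain ⟨i0, hi0⟩ := hcyc.exists_pow_eq (Equiv.Perm.mem_support.mp hu)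
        (Equiv.Perm.mem_support.mp hv)
      have hkv : (c ^ (i0 % n)) u = v := by rw [← hred]; exact hi0
      set k := i0 % n with hk
      have hkn : k < n := Nat.mod_lt _ hn0
      have hk0 : 0 < k := by
        rcases Nat.eq_zero_or_pos k with h0 | h0
        · exfalso; apply huv
          rw [← hkv, h0, pow_zero, Equiv.Perm.one_apply]
        · exact h0
      obtain ⟨j0, hj0⟩ := hcyc.exists_pow_eq (Equiv.Perm.mem_support.mp hu)
        (Equiv.Perm.mem_support.mp hx)
      have hix : (c ^ (j0 % n)) u = x := by rw [← hred]; exact hj0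
      set i := j0 % n with hi
      have hin : i < n := Nat.mod_lt _ hn0
      have hswap_uv : Equiv.swap u v = Equiv.swap u ((c ^ k) u) := by rw [hkv]
      have hcnkv : (c ^ (n - k)) v = u := by
        rw [← hkv, ← Equiv.Perm.mul_apply, ← pow_add, Nat.sub_add_cancel hkn.le, hcn1,
          Equiv.Perm.one_apply]
      have hswap_vu : Equiv.swap u v = Equiv.swap v ((c ^ (n - k)) v) := by
        rw [hcnkv, Equiv.swap_comm]
      by_cases hik : i < k
      · have hux : (Equiv.swap u v * σ).SameCycle u x := by
          have hx' : x ∈ {z ∈ (c.support : Set (Fin d)) |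
              (Equiv.swap u ((c ^ k) u) * σ).SameCycle u z} := by
            rw [cut_orbit hc hn hu hk0 hkn]
            exact ⟨i, hik, hix⟩
          rw [hswap_uv]; exact hx'.2
        have hset : {z ∈ (c.support : Set (Fin d)) | (Equiv.swap u v * σ).SameCycle x z}
            = {z ∈ (c.support : Set (Fin d)) | (Equiv.swap u v * σ).SameCycle u z} := by
          ext z
          exact ⟨fun h => ⟨h.1, hux.trans h.2⟩, fun h => ⟨h.1, hux.symm.trans h.2⟩⟩
        rw [hset, hswap_uv, cut_card hc hn hu hk0 hkn] at hcx
        exact ⟨u, Finset.mem_coe.mpr hu, by rw [← hcx, hkv]⟩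
      · have hnk0 : 0 < n - k := by omega
        have hnkn : n - k < n := by omega
        have hvx : (Equiv.swap u v * σ).SameCycle v x := by
          have hx' : x ∈ {z ∈ (c.support : Set (Fin d)) |
              (Equiv.swap v ((c ^ (n - k)) v) * σ).SameCycle v z} := by
            rw [cut_orbit hc hn hv hnk0 hnkn]
            refine ⟨i - k, Set.mem_Iio.mpr (by omega), ?_⟩
            show (c ^ (i - k)) v = x
            rw [← hkv, ← Equiv.Perm.mul_apply, ← pow_add, Nat.sub_add_cancel (by omega)]
            exact hix
          rw [hswap_vu]; exact hx'.2
        have hset : {z ∈ (c.support : Set (Fin d)) | (Equiv.swap u v * σ).SameCycle x z}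
            = {z ∈ (c.support : Set (Fin d)) | (Equiv.swap u v * σ).SameCycle v z} := by
          ext z
          exact ⟨fun h => ⟨h.1, hvx.trans h.2⟩, fun h => ⟨h.1, hvx.symm.trans h.2⟩⟩
        rw [hset, hswap_vu, cut_card hc hn hv hnk0 hnkn] at hcx
        refine ⟨v, Finset.mem_coe.mpr hv, ?_⟩
        have hm₁v : (c ^ m₁) v = u := by rw [← hcx]; exact hcnkv
        rw [hm₁v, Equiv.swap_comm]
    · rintro ⟨a, ha0, rfl⟩
      have ha : a ∈ c.support := Finset.mem_coe.mp ha0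
      have hb : (c ^ m₁) a ∈ c.support := Equiv.Perm.pow_apply_mem_support.mpr ha
      have hab : a ≠ (c ^ m₁) a := by
        intro h
        have : 0 = m₁ := cut_inj hcyc ha (by omega) (by omega) (by simpa using h)
        omega
      have hkeyswap : Equiv.swap a ((c ^ m₁) a)
          = Equiv.swap ((c ^ m₁) a) ((c ^ m₂) ((c ^ m₁) a)) := by
        rw [key a, Equiv.swap_comm]
      refine ⟨⟨a, _, hab, rfl⟩, ?_, a, ha, (c ^ m₁) a, hb, ?_, ?_, ?_⟩
      · rw [Equiv.Perm.support_swap hab]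
        intro z hz
        simp only [Finset.mem_insert, Finset.mem_singleton] at hz
        rcases hz with rfl | rfl
        exacts [ha, hb]
      · exact cut_not_same hc hn ha (by omega) (by omega)
      · exact cut_card hc hn ha (by omega) (by omega)
      · rw [hkeyswap]
        exact cut_card hc hn hb (by omega) (by omega)
  rw [hMeq]
  by_cases hmm : m₁ = m₂
  · rw [if_pos hmm]
    rw [← Finset.coe_image, Set.ncard_coe_finset]
    have hfib : ∀ τ ∈ c.support.image (fun a => Equiv.swap a ((c ^ m₁) a)),
        (c.support.filter (fun a => Equiv.swap a ((c ^ m₁) a) = τ)).card = 2 := by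
      intro τ hτ
      obtain ⟨a, ha, rfl⟩ := Finset.mem_image.mp hτ
      have hb : (c ^ m₁) a ∈ c.support := Equiv.Perm.pow_apply_mem_support.mpr ha
      have hab : a ≠ (c ^ m₁) a := by
        intro h
        have : 0 = m₁ := cut_inj hcyc ha (by omega) (by omega) (by simpa using h)
        omega
      have hfa : Equiv.swap ((c ^ m₁) a) ((c ^ m₁) ((c ^ m₁) a)) = Equiv.swap a ((c ^ m₁) a) := by
        have h' := key a
        rw [← hmm] at h'
        rw [h', Equiv.swap_comm]
      have hfilter : c.support.filter
            (fun a' => Equiv.swap a' ((c ^ m₁) a') = Equiv.swap a ((c ^ m₁) a))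
          = {a, (c ^ m₁) a} := by
        ext a'
        simp only [Finset.mem_filter, Finset.mem_insert, Finset.mem_singleton]
        constructor
        · rintro ⟨ha', heq⟩
          have he : Equiv.swap a ((c ^ m₁) a) a' = (c ^ m₁) a' := by
            rw [← heq]; exact Equiv.swap_apply_left _ _
          by_cases h1 : a' = a
          · exact Or.inl h1
          by_cases h2 : a' = (c ^ m₁) a
          · exact Or.inr h2
          rw [Equiv.swap_apply_of_ne_of_ne h1 h2] at he
          exfalso
          have : 0 = m₁ := cut_inj hcyc ha' (by omega) (by omega) (by simpa using he)
          omega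
        · rintro (rfl | rfl)
          · exact ⟨ha, rfl⟩
          · exact ⟨hb, hfa⟩
      rw [hfilter, Finset.card_pair hab]
    have hcount := Finset.card_eq_sum_card_fiberwise (s := c.support)
      (t := Finset.image (fun a => Equiv.swap a ((c ^ m₁) a)) c.support)
      (f := fun a => Equiv.swap a ((c ^ m₁) a))
      (fun x hx => Finset.mem_image_of_mem _ hx)
    rw [Finset.sum_congr rfl hfib, Finset.sum_const, smul_eq_mul] at hcount
    omega
  · rw [if_neg hmm]
    have hinj : Set.InjOn (fun a => Equiv.swap a ((c ^ m₁) a)) ↑c.support := by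
      intro a ha a' ha' heq
      simp only [Finset.mem_coe] at ha ha'
      simp only at heq
      have he : Equiv.swap a ((c ^ m₁) a) a' = (c ^ m₁) a' := by
        rw [heq]; exact Equiv.swap_apply_left _ _
      by_cases h1 : a' = a
      · exact h1.symm
      by_cases h2 : a' = (c ^ m₁) a
      · exfalso
        rw [h2, Equiv.swap_apply_right] at he
        have h3 : (c ^ (m₁ + m₁)) a = a := by
          rw [pow_add, Equiv.Perm.mul_apply]
          exact he.symm
        have hca : c a ≠ a := Equiv.Perm.mem_support.mp ha
        have h4 : c ^ (m₁ + m₁) = 1 := (hcyc.pow_eq_one_iff' hca).mpr h3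
        have h5 : n ∣ (m₁ + m₁) := by
          rw [← hn, ← hcyc.orderOf]; exact orderOf_dvd_of_pow_eq_one h4
        have h6 : n ≤ m₁ + m₁ := Nat.le_of_dvd (by omega) h5
        have h7 : n ∣ (m₁ + m₁ - n) := Nat.dvd_sub h5 dvd_rfl
        have h8 : m₁ + m₁ - n = 0 := Nat.eq_zero_of_dvd_of_lt h7 (by omega)
        omega
      · exfalso
        rw [Equiv.swap_apply_of_ne_of_ne h1 h2] at he
        have : 0 = m₁ := cut_inj hcyc ha' (by omega) (by omega) (by simpa using he)
        omega
    rw [Set.ncard_image_of_injOn hinj, Set.ncard_coe_finset, hn]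
end

section
/- Let f_α be the square integer matrix of size n (n = number of inner vertices plus number of independent cycles) whose first rows express the positions h(Vᵢ) = h(V₁) + Σ v(V,e)·l(e) along chosen chains of flags, and whose last g rows are cycle equations Σ v(V,e)·l(e) for chosen generators of H₁(Γ,ℤ). Then |det(f_α)| is independent of the choices of chains of flags and of the generators of H₁(Γ,ℤ), and equals the product of the weights ω(e) over all bounded edges e of Γ. -/
/-- `|det f_α| = ∏ ω(e)` (Lemma 5.26 / Remark 5.17): let `Γ` be a connected graph with
inner vertices `V` (root `root`), bounded edges `E` with endpoints `src`, `tgt` and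
positive weights `ω`, of genus `g` (so `#E + 1 = #V + g`).  For every choice of integer
1-chains `z i` with boundary `Vᵢ - root` (chains of flags from the root to `Vᵢ`) and of
integer cycles `w j` generating the cycle space `H₁(Γ, ℤ)`, and every identification of
the column index `Unit ⊕ E` (root position and edge lengths) with the row index
`V ⊕ Fin g`, the matrix `f_α` — vertex rows `(1, z i e · ω e)`, cycle rows
`(0, w j e · ω e)` — has `|det f_α| = ∏ e, ω e`; in particular `|det f_α|` is
independent of all choices. -/
theorem det_falpha_eq_prod_weights (V E : Type) [Fintype V] [Fintype E] [DecidableEq V]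
    [Nonempty V] (root : V) (src tgt : E → V) (ω : E → ℕ) (hω : ∀ e, 0 < ω e)
    (hconn : ∀ u v : V, Relation.ReflTransGen
        (fun x y => ∃ e, (src e = x ∧ tgt e = y) ∨ (src e = y ∧ tgt e = x)) u v)
    (g : ℕ) (hg : Fintype.card E + 1 = Fintype.card V + g)
    (z : V → E → ℤ)
    (hz : ∀ i v : V, ∑ e, z i e *
        ((if tgt e = v then 1 else 0) - (if src e = v then 1 else 0))
        = (if i = v then 1 else 0) - (if root = v then 1 else 0))
    (w : Fin g → E → ℤ)
    (hw : ∀ j, ∀ v : V, ∑ e, w j e *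
        ((if tgt e = v then 1 else 0) - (if src e = v then 1 else 0)) = 0)
    (hspan : ∀ c : E → ℤ, (∀ v : V, ∑ e, c e *
        ((if tgt e = v then 1 else 0) - (if src e = v then 1 else 0)) = 0) →
        c ∈ Submodule.span ℤ (Set.range w))
    (eqv : (V ⊕ Fin g) ≃ (Unit ⊕ E)) :
    ((Matrix.of (fun r c : V ⊕ Fin g =>
        match r, eqv c with
        | Sum.inl i, Sum.inl _ => (1 : ℤ)
        | Sum.inl i, Sum.inr e => z i e * ω e
        | Sum.inr j, Sum.inl _ => 0
        | Sum.inr j, Sum.inr e => w j e * ω e)).det).natAbs = ∏ e, ω e := by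
  classical
  set δ : E → V → ℤ := fun e v =>
    (if tgt e = v then 1 else 0) - (if src e = v then 1 else 0) with hδ
  set R : V ⊕ Fin g → (Unit ⊕ E) → ℤ :=
    Sum.elim (fun i => Sum.elim (fun _ : Unit => (1 : ℤ)) (z i))
      (fun j => Sum.elim (fun _ : Unit => (0 : ℤ)) (w j)) with hRdef
  -- cycles are in the span of the rows
  have hcyc : ∀ c : E → ℤ, (∀ v, ∑ e, c e * δ e v = 0) →
      Sum.elim (fun _ : Unit => (0 : ℤ)) c ∈ Submodule.span ℤ (Set.range R) := by
    intro c hc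
    obtain ⟨a, ha⟩ := (Submodule.mem_span_range_iff_exists_fun ℤ).mp (hspan c hc)
    have hkey : Sum.elim (fun _ : Unit => (0 : ℤ)) c = ∑ j, a j • R (Sum.inr j) := by
      funext k
      cases k with
      | inl u => simp [hRdef]
      | inr e =>
          have := congrFun ha e
          simp only [Finset.sum_apply, Pi.smul_apply, smul_eq_mul] at this
          simpa [hRdef] using this.symm
    rw [hkey]
    exact Submodule.sum_mem _ fun j _ =>
      Submodule.smul_mem _ _ (Submodule.subset_span ⟨Sum.inr j, rfl⟩)
  have hRmem : ∀ r, R r ∈ Submodule.span ℤ (Set.range R) := fun r =>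
    Submodule.subset_span ⟨r, rfl⟩
  have hzroot : ∀ v, ∑ e, z root e * δ e v = 0 := by
    intro v
    rw [hδ]
    simpa using hz root v
  have he0 : Sum.elim (fun _ : Unit => (1 : ℤ)) (fun _ => (0 : ℤ)) ∈ Submodule.span ℤ (Set.range R) := by
    have h1 := hcyc (z root) hzroot
    have h2 : Sum.elim (fun _ : Unit => (1 : ℤ)) (fun _ => (0 : ℤ))
        = R (Sum.inl root) - Sum.elim (fun _ : Unit => (0 : ℤ)) (z root) := by
      funext k; cases k <;> simp [hRdef]
    rw [h2]
    exact Submodule.sub_mem _ (hRmem (Sum.inl root)) h1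
  have hzi : ∀ i : V, Sum.elim (fun _ : Unit => (0 : ℤ)) (z i) ∈ Submodule.span ℤ (Set.range R) := by
    intro i
    have h2 : Sum.elim (fun _ : Unit => (0 : ℤ)) (z i)
        = R (Sum.inl i) - Sum.elim (fun _ : Unit => (1 : ℤ)) (fun _ => (0 : ℤ)) := by
      funext k; cases k <;> simp [hRdef]
    rw [h2]
    exact Submodule.sub_mem _ (hRmem (Sum.inl i)) he0
  have hedge : ∀ e : E, Sum.elim (fun _ : Unit => (0 : ℤ)) ((Pi.single e 1 : E → ℤ))
      ∈ Submodule.span ℤ (Set.range R) := by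
    intro e
    have hc : ∀ v, ∑ e', ((Pi.single e 1 : E → ℤ) + z (src e) - z (tgt e)) e' * δ e' v = 0 := by
      intro v
      have hs : ∑ e', (Pi.single e 1 : E → ℤ) e' * δ e' v = δ e v := by
        simp [Pi.single_apply, ite_mul]
      have h1 : ∑ e', z (src e) e' * δ e' v
          = (if src e = v then 1 else 0) - (if root = v then 1 else 0) := hz (src e) v
      have h2 : ∑ e', z (tgt e) e' * δ e' v
          = (if tgt e = v then 1 else 0) - (if root = v then 1 else 0) := hz (tgt e) v
      have expand : ∀ e', (Pi.single e 1 + z (src e) - z (tgt e) : E → ℤ) e' * δ e' v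
          = (Pi.single e 1 : E → ℤ) e' * δ e' v + z (src e) e' * δ e' v
            - z (tgt e) e' * δ e' v := by
        intro e'
        simp only [Pi.sub_apply, Pi.add_apply]
        ring
      simp only [expand, Finset.sum_sub_distrib, Finset.sum_add_distrib, hs, h1, h2]
      simp only [hδ]
      ring
    have h1 := hcyc _ hc
    have h2 : Sum.elim (fun _ : Unit => (0 : ℤ)) ((Pi.single e 1 : E → ℤ))
        = Sum.elim (fun _ : Unit => (0 : ℤ)) ((Pi.single e 1 : E → ℤ) + z (src e) - z (tgt e))
          - Sum.elim (fun _ : Unit => (0 : ℤ)) (z (src e))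
          + Sum.elim (fun _ : Unit => (0 : ℤ)) (z (tgt e)) := by
      funext k
      cases k with
      | inl u => simp
      | inr e' => simp; ring
    rw [h2]
    exact Submodule.add_mem _ (Submodule.sub_mem _ h1 (hzi _)) (hzi _)
  have htop : ∀ x : (Unit ⊕ E) → ℤ, x ∈ Submodule.span ℤ (Set.range R) := by
    intro x
    have hx : x = x (Sum.inl ()) • Sum.elim (fun _ : Unit => (1 : ℤ)) (fun _ => (0 : ℤ))
        + ∑ e, x (Sum.inr e) • Sum.elim (fun _ : Unit => (0 : ℤ)) ((Pi.single e 1 : E → ℤ)) := by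
      funext k
      cases k with
      | inl u =>
          cases u
          simp
      | inr e =>
          simp [Pi.single_apply]
    rw [hx]
    exact Submodule.add_mem _ (Submodule.smul_mem _ _ he0)
      (Submodule.sum_mem _ fun e _ => Submodule.smul_mem _ _ (hedge e))
  -- coefficients giving each standard basis vector
  choose u hu using fun c : V ⊕ Fin g =>
    (Submodule.mem_span_range_iff_exists_fun ℤ).mp (htop ((Pi.single (eqv c) 1 : (Unit ⊕ E) → ℤ)))
  set N : Matrix (V ⊕ Fin g) (V ⊕ Fin g) ℤ := Matrix.of (fun r c => R r (eqv c)) with hN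
  set B : Matrix (V ⊕ Fin g) (V ⊕ Fin g) ℤ := Matrix.of (fun c r => u c r) with hB
  have hBN : B * N = 1 := by
    ext c c'
    have key : (∑ r, u c r • R r) (eqv c') = (Pi.single (eqv c) 1 : (Unit ⊕ E) → ℤ) (eqv c') := by
      rw [hu c]
    simp only [Finset.sum_apply, Pi.smul_apply, smul_eq_mul] at key
    simp only [Matrix.mul_apply, hB, hN, Matrix.of_apply, key, Matrix.one_apply,
      Pi.single_apply, EmbeddingLike.apply_eq_iff_eq]
    by_cases h : c = c' <;> simp [h, eq_comm]
  have hdetN : (N.det).natAbs = 1 := by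
    have h1 : N.det * B.det = 1 := by
      rw [mul_comm, ← Matrix.det_mul, hBN, Matrix.det_one]
    rcases Int.isUnit_iff.mp (IsUnit.of_mul_eq_one _ h1) with h | h <;> simp [h]
  set d : V ⊕ Fin g → ℤ :=
    fun c => Sum.elim (fun _ : Unit => (1 : ℤ)) (fun e => (ω e : ℤ)) (eqv c) with hd
  have hfac : (Matrix.of (fun r c : V ⊕ Fin g =>
        match r, eqv c with
        | Sum.inl i, Sum.inl _ => (1 : ℤ)
        | Sum.inl i, Sum.inr e => z i e * ω e
        | Sum.inr j, Sum.inl _ => 0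
        | Sum.inr j, Sum.inr e => w j e * ω e)) = N * Matrix.diagonal d := by
    ext r c
    rw [Matrix.mul_diagonal]
    rcases hec : eqv c with k | e <;> rcases r with i | j <;>
      simp [hN, hRdef, hd, hec]
  have hdetd : (Matrix.diagonal d).det = (∏ e, ω e : ℕ) := by
    rw [Matrix.det_diagonal, hd]
    rw [Equiv.prod_comp eqv (Sum.elim (fun _ : Unit => (1 : ℤ)) (fun e => (ω e : ℤ)))]
    rw [Fintype.prod_sum_type]
    simp [← Nat.cast_prod]
  rw [hfac, Matrix.det_mul, hdetd, Int.natAbs_mul, hdetN, one_mul]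
  simp [← Nat.cast_prod]
end
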